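/- Let α₁, β₁, α₁', β₁', α₂, β₂, α₂', β₂' be integers with α₁β₁' − α₁'β₁ = 1 and such that the matrix A₁ · diag(−1,1) · A₂⁻¹ (with Aᵢ = [[αᵢ,βᵢ],[αᵢ',βᵢ']] ∈ SL(2,ℤ)) equals [[1, p],[s, −1]] for some integers p, s. Then with d = α₁', we have d·(−β₁/α₁) ≡ 1/α₁ (mod ℤ), d·(−β₂/α₂) ≡ 1/α₂ (mod ℤ), and d·(−β₁/α₁ − β₂/α₂) = 1/α₁ + 1/α₂. -/

import Mathlib

theorem stmt_7 (α₁ β₁ α₁' β₁' α₂ β₂ α₂' β₂' p : ℤ)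
    (hα₁ : 1 ≤ α₁) (hα₂ : 1 ≤ α₂)
    (hA₁ : α₁ * β₁' - α₁' * β₁ = 1) (hA₂ : α₂ * β₂' - α₂' * β₂ = 1)
    (h22 : α₁' * β₂ + α₂ * β₁' = -1) (h12 : α₁ * β₂ + α₂ * β₁ = p) :
    (∃ z : ℤ, (α₁' : ℚ) * (-(β₁ : ℚ) / α₁) - 1 / α₁ = z) ∧
    (∃ z : ℤ, (α₁' : ℚ) * (-(β₂ : ℚ) / α₂) - 1 / α₂ = z) ∧
    (α₁' : ℚ) * (-(β₁ : ℚ) / α₁ - (β₂ : ℚ) / α₂) = 1 / α₁ + 1 / α₂ := by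
  have h1 : (α₁ : ℚ) ≠ 0 := by exact_mod_cast (by linarith : α₁ ≠ 0)
  have h2 : (α₂ : ℚ) ≠ 0 := by exact_mod_cast (by linarith : α₂ ≠ 0)
  have e1 : (α₁ : ℚ) * β₁' - α₁' * β₁ = 1 := by exact_mod_cast hA₁
  have e2 : (α₁' : ℚ) * β₂ + α₂ * β₁' = -1 := by exact_mod_cast h22
  refine ⟨⟨-β₁', ?_⟩, ⟨β₁', ?_⟩, ?_⟩ <;> field_simp <;> push_cast
  · linear_combination e1
  · linear_combination (-1:ℚ) * e2
  · linear_combination (α₂:ℚ) * e1 - (α₁:ℚ) * e2
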